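/- arXiv:1306.2545 — 2 statements merged into one kernel-verified Lean document; each statement's English description precedes it below -/
import Mathlib

section
/- Let (C, w) be a small Λ-category and let n, m ≥ 1. Let Φ be the map sending a cyclic (n+m)-chain (x_0, …, x_{n+m}; f_0, …, f_{n+m}) in C to the pair consisting of (i) the cyclic n-chain with objects x_0, …, x_n, morphisms f_0, …, f_{n−1}, and return morphism f_{n+m} ∘ f_{n+m−1} ∘ ⋯ ∘ f_n : x_n → x_0, and (ii) the cyclic (m+1)-chain with objects x_0, x_n, x_{n+1}, …, x_{n+m}, first morphism f_{n−1} ∘ ⋯ ∘ f_0 : x_0 → x_n, followed by f_n, …, f_{n+m−1}, and return morphism f_{n+m} : x_{n+m} → x_0. Then Φ restricts to an injective map on the set N^Λ_{n+m}(C) of Λ-cyclic (n+m)-chains, its values are pairs of Λ-cyclic chains, and its image consists exactly of the pairs of a Λ-cyclic n-chain (y_0, …, y_n; g_0, …, g_n) and a Λ-cyclic (m+1)-chain (z_0, …, z_{m+1}; h_0, …, h_{m+1}) such that y_0 = z_0, y_n = z_1, g_{n−1} ∘ ⋯ ∘ g_0 = h_0, and g_n = h_{m+1} ∘ h_m ∘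 ⋯ ∘ h_1. (This is the 2-Segal map of the Λ-nerve of (C, w) associated with the subdivision of the (n+m+1)-gon with vertices 0, …, n+m along the diagonal {0, n}; its bijectivity onto the fiber product is the elementary case of the proposition that the Λ-nerve of a small Λ-category is a 2-Segal cyclic set.) -/
open CategoryTheory

universe v u

/-- A cyclic `n`-chain in a category `C`: objects `x_0, …, x_n`, morphisms
`f_k : x_k → x_{k+1}` for `0 ≤ k < n`, and a return morphism `f_n : x_n → x_0`.
This is the `n`-th component of the cyclic nerve of `C`. -/
structure CyclicChain (C : Type u) [Category.{v} C] (n : ℕ) where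
  obj : ∀ k : ℕ, k ≤ n → C
  map : ∀ k : ℕ, (h : k < n) → (obj k h.le ⟶ obj (k + 1) h)
  ret : obj n le_rfl ⟶ obj 0 (Nat.zero_le n)

namespace CyclicChain

variable {C : Type u} [Category.{v} C] {n : ℕ}

theorem obj_congr (c : CyclicChain C n) {a b : ℕ} (h : a = b) (ha : a ≤ n) (hb : b ≤ n) :
    c.obj a ha = c.obj b hb := by subst h; rfl

/-- The composite `f_{b-1} ∘ ⋯ ∘ f_a : x_a → x_b` of consecutive morphisms of a chain
(the identity when `a = b`). -/
def comp (c : CyclicChain C n) : ∀ (a b : ℕ) (hab : a ≤ b) (hb : b ≤ n),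
    (c.obj a (by omega) ⟶ c.obj b hb)
  | a, 0, hab, hb => eqToHom (c.obj_congr (Nat.le_zero.mp hab) _ _)
  | a, b + 1, hab, hb =>
    if h : a = b + 1 then eqToHom (c.obj_congr h _ _)
    else c.comp a b (by omega) (by omega) ≫ c.map b (by omega)

end CyclicChain

variable {C : Type u} [Category.{v} C]

/-- The `2`-Segal map of the cyclic nerve associated with the subdivision of the
`(n+m+1)`-gon with vertices `0, …, n+m` along the diagonal `{0, n}`: it sends a cyclic
`(n+m)`-chain to (i) the cyclic `n`-chain `(x_0, …, x_n; f_0, …, f_{n-1},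
f_{n+m} ∘ ⋯ ∘ f_n)` and (ii) the cyclic `(m+1)`-chain
`(x_0, x_n, …, x_{n+m}; f_{n-1} ∘ ⋯ ∘ f_0, f_n, …, f_{n+m-1}, f_{n+m})`. -/
def cyclicSegalMap (n m : ℕ) (c : CyclicChain C (n + m)) :
    CyclicChain C n × CyclicChain C (m + 1) :=
  (⟨fun k h => c.obj k (by omega),
    fun k h => c.map k (by omega),
    c.comp n (n + m) (by omega) le_rfl ≫ c.ret⟩,
   ⟨fun k hk => match k, hk with
      | 0, _ => c.obj 0 (by omega)
      | j + 1, hk => c.obj (n + j) (by omega),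
    fun k hk => match k, hk with
      | 0, _ => c.comp 0 n (by omega) (by omega)
      | j + 1, hk => c.map (n + j) (by omega),
    c.ret⟩)

/-- A `Λ`-cyclic chain in a `Λ`-category `(C, w)`: a cyclic chain such that for every
`0 ≤ i ≤ n` the composite of all `n+1` morphisms of the chain around the cycle, starting and
ending at `x_i`, equals `w_{x_i}`.  These are the components of the `Λ`-nerve of `(C, w)`. -/
def IsLambdaChain {C : Type u} [Category.{v} C] (w : 𝟭 C ⟶ 𝟭 C) {n : ℕ}
    (c : CyclicChain C n) : Prop :=
  ∀ (i : ℕ) (h : i ≤ n),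
    c.comp i n h le_rfl ≫ c.ret ≫ c.comp 0 i (Nat.zero_le i) h = w.app (c.obj i h)

namespace CyclicChain

variable {C : Type u} [Category.{v} C] {n : ℕ}

theorem map_congr (c : CyclicChain C n) {a b : ℕ} (h : a = b) (ha : a < n) (hb : b < n) :
    c.map a ha = eqToHom (c.obj_congr h _ _) ≫ c.map b hb ≫
      eqToHom (c.obj_congr (by omega) _ _) := by
  subst h; simp

theorem comp_congr (c : CyclicChain C n) {a b a' b' : ℕ} (h1 : a = a') (h2 : b = b')
    (hab : a ≤ b) (hb : b ≤ n) (hab' : a' ≤ b') (hb' : b' ≤ n) :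
    c.comp a b hab hb = eqToHom (c.obj_congr h1 _ _) ≫ c.comp a' b' hab' hb' ≫
      eqToHom (c.obj_congr h2.symm _ _) := by
  subst h1; subst h2; simp

theorem comp_self (c : CyclicChain C n) (a : ℕ) (h : a ≤ n) :
    c.comp a a le_rfl h = 𝟙 _ := by
  cases a <;> simp [comp]

theorem comp_succ (c : CyclicChain C n) (a b : ℕ) (hab : a ≤ b) (hb : b + 1 ≤ n) :
    c.comp a (b + 1) (by omega) hb
      = c.comp a b hab (by omega) ≫ c.map b (by omega) := by
  rw [comp, dif_neg (by omega)]

theorem comp_comp (c : CyclicChain C n) (a b d : ℕ) (hab : a ≤ b) (hbd : b ≤ d)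
    (hd : d ≤ n) :
    c.comp a b hab (by omega) ≫ c.comp b d hbd hd = c.comp a d (by omega) hd := by
  induction d, hbd using Nat.le_induction with
  | base => rw [comp_self]; simp
  | succ d hbd ih =>
      rw [comp_succ c b d hbd hd, comp_succ c a d (by omega) hd, ← Category.assoc, ih (by omega)]

theorem comp_zero_one (c : CyclicChain C n) (h : 1 ≤ n) :
    c.comp 0 1 (by omega) h = c.map 0 (by omega) := by
  rw [comp_succ c 0 0 le_rfl h, comp_self]; simp

theorem obj_eq_of_eq {s t : CyclicChain C n} (h : s = t) (k : ℕ) (hk : k ≤ n) :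
    s.obj k hk = t.obj k hk := by subst h; rfl

theorem map_eq_of_eq {s t : CyclicChain C n} (h : s = t) (k : ℕ) (hk : k < n) :
    s.map k hk = eqToHom (obj_eq_of_eq h k hk.le) ≫ t.map k hk ≫
      eqToHom (obj_eq_of_eq h (k + 1) hk).symm := by subst h; simp

theorem ret_eq_of_eq {s t : CyclicChain C n} (h : s = t) :
    s.ret = eqToHom (obj_eq_of_eq h n le_rfl) ≫ t.ret ≫
      eqToHom (obj_eq_of_eq h 0 (Nat.zero_le n)).symm := by subst h; simp

theorem comp_eq_of_eq {s t : CyclicChain C n} (h : s = t) (a b : ℕ) (hab : a ≤ b)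
    (hb : b ≤ n) :
    s.comp a b hab hb = eqToHom (obj_eq_of_eq h a (by omega)) ≫ t.comp a b hab hb ≫
      eqToHom (obj_eq_of_eq h b hb).symm := by subst h; simp

theorem ext' {s t : CyclicChain C n} (hobj : ∀ k (hk : k ≤ n), s.obj k hk = t.obj k hk)
    (hmap : ∀ k (hk : k < n), s.map k hk = eqToHom (hobj k hk.le) ≫ t.map k hk ≫
      eqToHom (hobj (k + 1) hk).symm)
    (hret : s.ret = eqToHom (hobj n le_rfl) ≫ t.ret ≫
      eqToHom (hobj 0 (Nat.zero_le n)).symm) : s = t := by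
  obtain ⟨o, ma, r⟩ := s
  obtain ⟨o', ma', r'⟩ := t
  obtain rfl : o = o' := funext fun k => funext fun hk => hobj k hk
  simp only [eqToHom_refl, Category.comp_id, Category.id_comp] at hmap hret
  obtain rfl : ma = ma' := funext fun k => funext fun hk => hmap k hk
  obtain rfl : r = r' := hret
  rfl

end CyclicChain
section SegalLemmas

variable {C : Type u} [Category.{v} C] (n m : ℕ) (c : CyclicChain C (n + m))

theorem segal1_comp (a b : ℕ) (hab : a ≤ b) (hb : b ≤ n) :
    (cyclicSegalMap n m c).1.comp a b hab hb = c.comp a b hab (by omega) := by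
  induction b, hab using Nat.le_induction with
  | base => rw [CyclicChain.comp_self, CyclicChain.comp_self]; rfl
  | succ b hab ih =>
      rw [CyclicChain.comp_succ _ a b hab hb, CyclicChain.comp_succ c a b hab (by omega),
        ih (by omega)]
      rfl

theorem segal2_comp_succ (a b : ℕ) (hab : a ≤ b) (hb : b ≤ m) :
    (cyclicSegalMap n m c).2.comp (a + 1) (b + 1) (by omega) (by omega)
      = c.comp (n + a) (n + b) (by omega) (by omega) := by
  induction b, hab using Nat.le_induction with
  | base => rw [CyclicChain.comp_self, CyclicChain.comp_self]; rfl
  | succ b hab ih =>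
      rw [CyclicChain.comp_succ _ (a+1) (b+1) (by omega) (by omega), ih (by omega)]
      exact (CyclicChain.comp_succ c (n+a) (n+b) (by omega) (by omega)).symm

theorem segal2_comp_zero (b : ℕ) (hb : b ≤ m) :
    (cyclicSegalMap n m c).2.comp 0 (b + 1) (by omega) (by omega)
      = c.comp 0 (n + b) (by omega) (by omega) := by
  induction b with
  | zero =>
      rw [CyclicChain.comp_zero_one _ (by omega)]
      exact rfl
  | succ b ih =>
      rw [CyclicChain.comp_succ _ 0 (b+1) (by omega) (by omega), ih (by omega)]
      exact (CyclicChain.comp_succ c 0 (n+b) (by omega) (by omega)).symm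

end SegalLemmas
section Glue

variable {C : Type u} [Category.{v} C] {n m : ℕ}

/-- The objects of the glued chain. -/
def glueObj (cn : CyclicChain C n) (cm : CyclicChain C (m + 1)) (k : ℕ) (h : k ≤ n + m) : C :=
  if hk : k ≤ n then cn.obj k hk else cm.obj (k - n + 1) (by omega)

theorem glueObj_le (cn : CyclicChain C n) (cm : CyclicChain C (m + 1)) (k : ℕ)
    (h : k ≤ n + m) (hk : k ≤ n) : glueObj cn cm k h = cn.obj k hk := dif_pos hk

theorem glueObj_ge {cn : CyclicChain C n} {cm : CyclicChain C (m + 1)}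
    (e1 : cn.obj n le_rfl = cm.obj 1 (by omega)) (k : ℕ) (h : k ≤ n + m) (hk : n ≤ k) :
    glueObj cn cm k h = cm.obj (k - n + 1) (by omega) := by
  by_cases h' : k ≤ n
  · obtain rfl : k = n := le_antisymm h' hk
    rw [glueObj_le cn cm k h h', e1]
    exact cm.obj_congr (by omega) _ _
  · exact dif_neg h'

/-- The glued chain. -/
def glue (cn : CyclicChain C n) (cm : CyclicChain C (m + 1))
    (e0 : cn.obj 0 (Nat.zero_le n) = cm.obj 0 (Nat.zero_le (m + 1)))
    (e1 : cn.obj n le_rfl = cm.obj 1 (by omega)) : CyclicChain C (n + m) where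
  obj := glueObj cn cm
  map k hk :=
    if hkn : k + 1 ≤ n then
      eqToHom (glueObj_le cn cm k _ (by omega)) ≫ cn.map k (by omega) ≫
        eqToHom (glueObj_le cn cm (k + 1) _ hkn).symm
    else
      eqToHom (glueObj_ge e1 k _ (by omega)) ≫ cm.map (k - n + 1) (by omega) ≫
        eqToHom ((cm.obj_congr (show k - n + 1 + 1 = (k + 1) - n + 1 by omega) _ _).trans
          (glueObj_ge e1 (k + 1) _ (by omega)).symm)
  ret :=
    eqToHom ((glueObj_ge e1 (n + m) le_rfl (by omega)).trans
        (cm.obj_congr (show n + m - n + 1 = m + 1 by omega) _ _)) ≫ cm.ret ≫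
      eqToHom e0.symm ≫ eqToHom (glueObj_le cn cm 0 _ (Nat.zero_le n)).symm

variable {cn : CyclicChain C n} {cm : CyclicChain C (m + 1)}
  {e0 : cn.obj 0 (Nat.zero_le n) = cm.obj 0 (Nat.zero_le (m + 1))}
  {e1 : cn.obj n le_rfl = cm.obj 1 (by omega)}

theorem glue_comp_le (a b : ℕ) (hab : a ≤ b) (hb : b ≤ n) :
    (glue cn cm e0 e1).comp a b hab (by omega)
      = eqToHom (glueObj_le cn cm a (by omega) (by omega)) ≫ cn.comp a b hab hb ≫
        eqToHom (glueObj_le cn cm b (by omega) hb).symm := by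
  induction b, hab using Nat.le_induction with
  | base => rw [CyclicChain.comp_self, CyclicChain.comp_self]; simp; rfl
  | succ b hab ih =>
      rw [CyclicChain.comp_succ _ a b hab (by omega), ih (by omega),
        CyclicChain.comp_succ cn a b hab hb]
      simp only [glue]
      rw [dif_pos hb]
      simp

theorem glue_comp_ge (a b : ℕ) (ha : n ≤ a) (hab : a ≤ b) (hb : b ≤ n + m) :
    (glue cn cm e0 e1).comp a b hab hb
      = eqToHom (glueObj_ge e1 a (by omega) ha) ≫
        cm.comp (a - n + 1) (b - n + 1) (by omega) (by omega) ≫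
        eqToHom (glueObj_ge e1 b hb (by omega)).symm := by
  induction b, hab using Nat.le_induction with
  | base => rw [CyclicChain.comp_self, CyclicChain.comp_self]; simp; rfl
  | succ b hab ih =>
      rw [CyclicChain.comp_succ _ a b hab hb, ih (by omega)]
      simp only [glue]
      rw [dif_neg (by omega : ¬ b + 1 ≤ n),
        cm.comp_congr (rfl : a - n + 1 = a - n + 1) (show (b + 1) - n + 1 = (b - n + 1) + 1 by omega)
          (by omega) (by omega) (by omega) (by omega),
        CyclicChain.comp_succ cm (a - n + 1) (b - n + 1) (by omega) (by omega)]
      simp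

end Glue
section Lam

variable {C : Type u} [Category.{v} C] {n m : ℕ} (w : 𝟭 C ⟶ 𝟭 C)

theorem segal1_lambda (c : CyclicChain C (n + m)) (hc : IsLambdaChain w c) :
    IsLambdaChain w (cyclicSegalMap n m c).1 := by
  intro i h
  rw [segal1_comp n m c i n h le_rfl, segal1_comp n m c 0 i (by omega) h]
  show c.comp i n _ _ ≫ (c.comp n (n + m) _ _ ≫ c.ret) ≫ c.comp 0 i _ _ = _
  rw [← Category.assoc, ← Category.assoc,
    CyclicChain.comp_comp c i n (n + m) h (by omega) le_rfl, Category.assoc]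
  exact hc i (by omega)

theorem segal2_lambda (c : CyclicChain C (n + m)) (hc : IsLambdaChain w c) :
    IsLambdaChain w (cyclicSegalMap n m c).2 := by
  intro i h
  match i, h with
  | 0, h =>
      have h0 := hc 0 (Nat.zero_le _)
      rw [CyclicChain.comp_self, Category.comp_id] at h0
      rw [CyclicChain.comp_self, Category.comp_id]
      exact (congrArg (fun g => g ≫ (cyclicSegalMap n m c).2.ret)
        (segal2_comp_zero n m c m le_rfl)).trans h0
  | j + 1, h =>
      exact (congrArg₂ (fun g g' => g ≫ (cyclicSegalMap n m c).2.ret ≫ g')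
        (segal2_comp_succ n m c j m (by omega) le_rfl)
        (segal2_comp_zero n m c j (by omega))).trans (hc (n + j) (by omega))

theorem segal_inj (c1 c2 : CyclicChain C (n + m))
    (hseg : cyclicSegalMap n m c1 = cyclicSegalMap n m c2) : c1 = c2 := by
  have h1 : (cyclicSegalMap n m c1).1 = (cyclicSegalMap n m c2).1 := congrArg Prod.fst hseg
  have h2 : (cyclicSegalMap n m c1).2 = (cyclicSegalMap n m c2).2 := congrArg Prod.snd hseg
  have hobj : ∀ k (hk : k ≤ n + m), c1.obj k hk = c2.obj k hk := by
    intro k hk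
    by_cases hkn : k ≤ n
    · exact CyclicChain.obj_eq_of_eq h1 k hkn
    · obtain ⟨j, rfl⟩ : ∃ j, k = n + j := ⟨k - n, by omega⟩
      exact CyclicChain.obj_eq_of_eq h2 (j + 1) (by omega)
  refine CyclicChain.ext' hobj (fun k hk => ?_) ?_
  · by_cases hkn : k < n
    · exact CyclicChain.map_eq_of_eq h1 k hkn
    · obtain ⟨j, rfl⟩ : ∃ j, k = n + j := ⟨k - n, by omega⟩
      exact CyclicChain.map_eq_of_eq h2 (j + 1) (by omega)
  · exact CyclicChain.ret_eq_of_eq h2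

end Lam
section Back

variable {C : Type u} [Category.{v} C] {n m : ℕ} (w : 𝟭 C ⟶ 𝟭 C)
variable {cn : CyclicChain C n} {cm : CyclicChain C (m + 1)}
  {e0 : cn.obj 0 (Nat.zero_le n) = cm.obj 0 (Nat.zero_le (m + 1))}
  {e1 : cn.obj n le_rfl = cm.obj 1 (Nat.le_add_left 1 m)}

theorem natlemma {X Y : C} (h : X = Y) :
    eqToHom h ≫ w.app Y ≫ eqToHom h.symm = w.app X := by subst h; simp

theorem glue_lambda (hn : 1 ≤ n) (hm : 1 ≤ m)
    (hcn : IsLambdaChain w cn) (hcm : IsLambdaChain w cm)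
    (hcomp : cn.comp 0 n (Nat.zero_le n) le_rfl
      = eqToHom e0 ≫ cm.map 0 (Nat.succ_pos m) ≫ eqToHom e1.symm)
    (hret : cn.ret = eqToHom e1 ≫ cm.comp 1 (m + 1) (Nat.le_add_left 1 m) le_rfl ≫ cm.ret
      ≫ eqToHom e0.symm) :
    IsLambdaChain w (glue cn cm e0 e1) := by
  have hret' : ∀ {Z : C} (g : cn.obj 0 (Nat.zero_le n) ⟶ Z),
      eqToHom e1 ≫ cm.comp 1 (m + 1) (by omega) le_rfl ≫ cm.ret ≫ eqToHom e0.symm ≫ g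
        = cn.ret ≫ g := by
    intro Z g; rw [hret]; simp
  intro i h
  by_cases hi : i ≤ n
  · rw [← CyclicChain.comp_comp (glue cn cm e0 e1) i n (n + m) hi (by omega) le_rfl,
      glue_comp_le i n hi le_rfl, glue_comp_ge n (n + m) le_rfl (by omega) le_rfl,
      glue_comp_le 0 i (by omega) hi,
      cm.comp_congr (show n - n + 1 = 1 by omega) (show n + m - n + 1 = m + 1 by omega)
        (by omega) (by omega) (by omega) le_rfl]
    simp only [glue, Category.assoc, eqToHom_trans_assoc, eqToHom_trans, eqToHom_refl,
      Category.id_comp, Category.comp_id]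
    have hw : ∀ {Z : C} (g : cn.obj i hi ⟶ Z),
        cn.comp i n hi le_rfl ≫ cn.ret ≫ cn.comp 0 i (Nat.zero_le i) hi ≫ g
          = w.app (cn.obj i hi) ≫ g := by
      intro Z g; rw [← hcn i hi]; simp
    rw [hret', hw]
    exact natlemma w _
  · rw [← CyclicChain.comp_comp (glue cn cm e0 e1) 0 n i (Nat.zero_le n) (by omega) h,
      glue_comp_ge i (n + m) (by omega) (by omega) le_rfl,
      glue_comp_le 0 n (Nat.zero_le n) le_rfl,
      glue_comp_ge n i le_rfl (by omega) h,
      cm.comp_congr (rfl : i - n + 1 = i - n + 1) (show n + m - n + 1 = m + 1 by omega)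
        (by omega) (by omega) (by omega) le_rfl,
      cm.comp_congr (show n - n + 1 = 1 by omega) (rfl : i - n + 1 = i - n + 1)
        (by omega) (by omega) (by omega) (by omega),
      hcomp, ← cm.comp_zero_one (by omega)]
    simp only [glue, Category.assoc, eqToHom_trans_assoc, eqToHom_trans, eqToHom_refl,
      Category.id_comp, Category.comp_id]
    have cc : ∀ {Z : C} (g : cm.obj (i - n + 1) (by omega) ⟶ Z),
        cm.comp 0 1 (by omega) (by omega) ≫ cm.comp 1 (i - n + 1) (by omega) (by omega) ≫ g
          = cm.comp 0 (i - n + 1) (by omega) (by omega) ≫ g := by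
      intro Z g
      rw [← Category.assoc, CyclicChain.comp_comp]
    have hw : ∀ {Z : C} (g : cm.obj (i - n + 1) (by omega) ⟶ Z),
        cm.comp (i - n + 1) (m + 1) (by omega) le_rfl ≫ cm.ret
            ≫ cm.comp 0 (i - n + 1) (by omega) (by omega) ≫ g
          = w.app (cm.obj (i - n + 1) (by omega)) ≫ g := by
      intro Z g; rw [← hcm (i - n + 1) (by omega)]; simp
    rw [cc, hw]
    exact natlemma w _


theorem segal_glue (hn : 1 ≤ n) (hm : 1 ≤ m)
    (hcomp : cn.comp 0 n (Nat.zero_le n) le_rfl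
      = eqToHom e0 ≫ cm.map 0 (Nat.succ_pos m) ≫ eqToHom e1.symm)
    (hret : cn.ret = eqToHom e1 ≫ cm.comp 1 (m + 1) (Nat.le_add_left 1 m) le_rfl ≫ cm.ret
      ≫ eqToHom e0.symm) :
    cyclicSegalMap n m (glue cn cm e0 e1) = (cn, cm) := by
  have g1 : (cyclicSegalMap n m (glue cn cm e0 e1)).1 = cn := by
    have hobj : ∀ k (hk : k ≤ n),
        (cyclicSegalMap n m (glue cn cm e0 e1)).1.obj k hk = cn.obj k hk := fun k hk =>
      glueObj_le cn cm k (by omega) hk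
    refine CyclicChain.ext' hobj (fun k hk => ?_) ?_
    · show (glue cn cm e0 e1).map k (by omega) = _
      simp only [glue]
      rw [dif_pos (show k + 1 ≤ n by omega)]
      rfl
    · show (glue cn cm e0 e1).comp n (n + m) (by omega) le_rfl ≫ (glue cn cm e0 e1).ret = _
      rw [glue_comp_ge n (n + m) le_rfl (by omega) le_rfl,
        cm.comp_congr (show n - n + 1 = 1 by omega) (show n + m - n + 1 = m + 1 by omega)
          (by omega) (by omega) (by omega) le_rfl, hret]
      simp only [glue, Category.assoc, eqToHom_trans_assoc, eqToHom_trans, eqToHom_refl,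
        Category.id_comp, Category.comp_id]
      erw [eqToHom_trans_assoc, eqToHom_trans]
      rfl
  have g2 : (cyclicSegalMap n m (glue cn cm e0 e1)).2 = cm := by
    have hobj : ∀ k (hk : k ≤ m + 1),
        (cyclicSegalMap n m (glue cn cm e0 e1)).2.obj k hk = cm.obj k hk := by
      intro k hk
      match k, hk with
      | 0, hk => exact (glueObj_le cn cm 0 (by omega) (by omega)).trans e0
      | j + 1, hk =>
          exact (glueObj_ge e1 (n + j) (by omega) (by omega)).trans
            (cm.obj_congr (by omega) _ _)
    refine CyclicChain.ext' hobj (fun k hk => ?_) ?_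
    · match k, hk with
      | 0, hk =>
          show (glue cn cm e0 e1).comp 0 n (by omega) (by omega) = _
          rw [glue_comp_le 0 n (Nat.zero_le n) le_rfl, hcomp]
          simp
          rfl
      | j + 1, hk =>
          show (glue cn cm e0 e1).map (n + j) (by omega) = _
          simp only [glue]
          rw [dif_neg (show ¬ n + j + 1 ≤ n by omega),
            cm.map_congr (show n + j - n + 1 = j + 1 by omega) (by omega) (by omega)]
          simp
          rfl
    · show (glue cn cm e0 e1).ret = _
      simp only [glue, Category.assoc, eqToHom_trans_assoc, eqToHom_trans, eqToHom_refl,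
        Category.id_comp, Category.comp_id]
      rfl
  exact Prod.ext g1 g2

end Back

/-- For a small `Λ`-category `(C, w)` and `n, m ≥ 1`, the `2`-Segal map `Φ` of
the `Λ`-nerve of `(C, w)` associated with the subdivision of the `(n+m+1)`-gon along the diagonal
`{0, n}` restricts to an injective map on `Λ`-cyclic `(n+m)`-chains, its values are pairs of
`Λ`-cyclic chains, and its image consists exactly of the pairs of a `Λ`-cyclic `n`-chain
`(y_•; g_•)` and a `Λ`-cyclic `(m+1)`-chain `(z_•; h_•)` with `y_0 = z_0`, `y_n = z_1`,
`g_{n-1} ∘ ⋯ ∘ g_0 = h_0` and `g_n = h_{m+1} ∘ ⋯ ∘ h_1`. -/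
theorem lambdaNerve_twoSegal (C : Type u) [SmallCategory C] (w : 𝟭 C ⟶ 𝟭 C) (n m : ℕ)
    (hn : 1 ≤ n) (hm : 1 ≤ m) :
    (Set.InjOn (cyclicSegalMap (C := C) n m) {c | IsLambdaChain w c}) ∧
    (∀ c : CyclicChain C (n + m), IsLambdaChain w c →
      IsLambdaChain w (cyclicSegalMap n m c).1 ∧ IsLambdaChain w (cyclicSegalMap n m c).2) ∧
    (∀ (cn : CyclicChain C n) (cm : CyclicChain C (m + 1)),
      IsLambdaChain w cn → IsLambdaChain w cm →
      ((∃ c : CyclicChain C (n + m), IsLambdaChain w c ∧ cyclicSegalMap n m c = (cn, cm)) ↔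
        ∃ (e0 : cn.obj 0 (Nat.zero_le n) = cm.obj 0 (Nat.zero_le (m + 1)))
          (e1 : cn.obj n le_rfl = cm.obj 1 (by omega)),
          cn.comp 0 n (Nat.zero_le n) le_rfl
              = eqToHom e0 ≫ cm.map 0 (by omega) ≫ eqToHom e1.symm ∧
          cn.ret = eqToHom e1 ≫ cm.comp 1 (m + 1) (by omega) le_rfl ≫ cm.ret
              ≫ eqToHom e0.symm)) := by
  refine ⟨fun c1 _ c2 _ h => segal_inj c1 c2 h,
    fun c hc => ⟨segal1_lambda w c hc, segal2_lambda w c hc⟩,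
    fun cn cm hcn hcm => ⟨?_, ?_⟩⟩
  · rintro ⟨c, hc, hseg⟩
    have h1 : (cyclicSegalMap n m c).1 = cn := congrArg Prod.fst hseg
    have h2 : (cyclicSegalMap n m c).2 = cm := congrArg Prod.snd hseg
    have E0 : c.obj 0 (by omega) = cm.obj 0 (Nat.zero_le (m + 1)) :=
      CyclicChain.obj_eq_of_eq h2 0 (by omega)
    have E1 : c.obj n (by omega) = cm.obj 1 (by omega) :=
      CyclicChain.obj_eq_of_eq h2 1 (by omega)
    have F0 : cn.obj 0 (Nat.zero_le n) = c.obj 0 (by omega) :=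
      (CyclicChain.obj_eq_of_eq h1 0 (by omega)).symm
    have F1 : cn.obj n le_rfl = c.obj n (by omega) :=
      (CyclicChain.obj_eq_of_eq h1 n le_rfl).symm
    refine ⟨F0.trans E0, F1.trans E1, ?_, ?_⟩
    · have key : c.comp 0 n (by omega) (by omega)
          = eqToHom E0 ≫ cm.map 0 (by omega) ≫ eqToHom E1.symm :=
        CyclicChain.map_eq_of_eq h2 0 (by omega)
      have A : cn.comp 0 n (Nat.zero_le n) le_rfl
          = eqToHom F0 ≫ c.comp 0 n (by omega) (by omega) ≫ eqToHom F1.symm := by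
        rw [CyclicChain.comp_eq_of_eq h1.symm 0 n (Nat.zero_le n) le_rfl, segal1_comp]
        rfl
      rw [A, key]
      simp
    · have key2 : c.comp n (n + m) (by omega) le_rfl
          = eqToHom E1 ≫ cm.comp 1 (m + 1) (by omega) le_rfl
            ≫ eqToHom (CyclicChain.obj_eq_of_eq h2 (m + 1) le_rfl).symm := by
        rw [show c.comp n (n + m) (by omega) le_rfl
            = (cyclicSegalMap n m c).2.comp 1 (m + 1) (by omega) le_rfl from
          (segal2_comp_succ n m c 0 m (by omega) le_rfl).symm,
          CyclicChain.comp_eq_of_eq h2 1 (m + 1) (by omega) le_rfl]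
        rfl
      have key3 : cm.ret
          = eqToHom (CyclicChain.obj_eq_of_eq h2 (m + 1) le_rfl).symm ≫ c.ret
            ≫ eqToHom E0 := CyclicChain.ret_eq_of_eq h2.symm
      have A2 : cn.ret
          = eqToHom F1 ≫ (c.comp n (n + m) (by omega) le_rfl ≫ c.ret) ≫ eqToHom F0.symm :=
        CyclicChain.ret_eq_of_eq h1.symm
      rw [A2, key2, key3]
      simp
      dsimp only [cyclicSegalMap]
      simp
  · rintro ⟨e0, e1, hcomp, hret⟩
    exact ⟨glue cn cm e0 e1, glue_lambda w hn hm hcn hcm hcomp hret,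
      segal_glue hn hm hcomp hret⟩
end

section
/- For small Λ-categories C, C', D there is a bijection, natural in C, C' and D, between the set Fun_Λ(C ⊗_ℕ C', D) of Λ-functors C ⊗_ℕ C' → D and the set Fun_Λ(C, IFun_Λ(C', D)) of Λ-functors from C to the Λ-category IFun_Λ(C', D) of Λ-functors C' → D; this exhibits the monoidal structure ⊗_ℕ on the category of small Λ-categories as closed. -/
open CategoryTheory

/-- The `n`-fold composition power `(w_x)ⁿ` of the component of a natural transformation
`w : Id_C ⇒ Id_C` at `x`. -/
def wpow {C : Type} [SmallCategory C] (w : 𝟭 C ⟶ 𝟭 C) (x : C) : ℕ → (x ⟶ x)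
  | 0 => 𝟙 x
  | t + 1 => w.app x ≫ wpow w x t

theorem wpow_natural {C : Type} [SmallCategory C] (w : 𝟭 C ⟶ 𝟭 C) {x y : C}
    (f : x ⟶ y) (t : ℕ) : wpow w x t ≫ f = f ≫ wpow w y t := by
  induction t with
  | zero => simp [wpow]
  | succ t ih =>
    have h := w.naturality f
    simp only [Functor.id_map] at h
    simp only [wpow, Category.assoc, ih]
    rw [← Category.assoc, ← h, Category.assoc]

/-- The `ℕ`-action `t + f := f ∘ (w_x)ᵗ = (w_y)ᵗ ∘ f` on the Hom-sets of a `Λ`-category. -/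
def homAct {C : Type} [SmallCategory C] (w : 𝟭 C ⟶ 𝟭 C) {x y : C} (t : ℕ) (f : x ⟶ y) :
    x ⟶ y :=
  wpow w x t ≫ f

/-- A `Λ`-functor between `Λ`-categories: a functor commuting with the `Λ`-structures. -/
def IsLambdaFunctor {C D : Type} [SmallCategory C] [SmallCategory D]
    (w : 𝟭 C ⟶ 𝟭 C) (wD : 𝟭 D ⟶ 𝟭 D) (F : C ⥤ D) : Prop :=
  ∀ x : C, F.map (w.app x) = wD.app (F.obj x)

theorem map_wpow {C D : Type} [SmallCategory C] [SmallCategory D]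
    {w : 𝟭 C ⟶ 𝟭 C} {wD : 𝟭 D ⟶ 𝟭 D} {F : C ⥤ D} (hF : IsLambdaFunctor w wD F)
    (x : C) (t : ℕ) : F.map (wpow w x t) = wpow wD (F.obj x) t := by
  induction t with
  | zero => simp [wpow]
  | succ t ih => simp [wpow, ih, hF x]

theorem map_homAct {C D : Type} [SmallCategory C] [SmallCategory D]
    {w : 𝟭 C ⟶ 𝟭 C} {wD : 𝟭 D ⟶ 𝟭 D} {F : C ⥤ D} (hF : IsLambdaFunctor w wD F)
    {x y : C} (t : ℕ) (f : x ⟶ y) : F.map (homAct w t f) = homAct wD t (F.map f) := by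
  simp [homAct, map_wpow hF]

/-- Objects of the tensor product `Λ`-category `C ⊗_ℕ C'`: pairs of objects. -/
structure TensObj (C C' : Type) [SmallCategory C] [SmallCategory C']
    (w : 𝟭 C ⟶ 𝟭 C) (w' : 𝟭 C' ⟶ 𝟭 C') where
  fst : C
  snd : C'

variable {C C' : Type} [SmallCategory C] [SmallCategory C']

/-- The relation `(t + f, f') ∼ (f, t + f')` generating the tensor product of the `ℕ`-sets of
morphisms. -/
def trel (w : 𝟭 C ⟶ 𝟭 C) (w' : 𝟭 C' ⟶ 𝟭 C') {x y : C} {x' y' : C'} :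
    ((x ⟶ y) × (x' ⟶ y')) → ((x ⟶ y) × (x' ⟶ y')) → Prop := fun p q =>
  ∃ (t : ℕ) (f : x ⟶ y) (f' : x' ⟶ y'),
    p = (homAct w t f, f') ∧ q = (f, homAct w' t f')

/-- Hom-sets of the tensor product `Λ`-category:
`Hom((x,x'),(y,y')) = Hom(x,y) ⊗_ℕ Hom(x',y')`. -/
def THom {w : 𝟭 C ⟶ 𝟭 C} {w' : 𝟭 C' ⟶ 𝟭 C'} (X Y : TensObj C C' w w') : Type :=
  Quot (trel w w' (x := X.fst) (y := Y.fst) (x' := X.snd) (y' := Y.snd))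

/-- The class of a pair of morphisms in the tensor Hom-set. -/
def THom.mk {w : 𝟭 C ⟶ 𝟭 C} {w' : 𝟭 C' ⟶ 𝟭 C'} {X Y : TensObj C C' w w'}
    (f : X.fst ⟶ Y.fst) (f' : X.snd ⟶ Y.snd) : THom X Y :=
  Quot.mk _ (f, f')

/-- Composition in the tensor product `Λ`-category, induced by the `ℕ`-bilinearity of
composition. -/
def tcomp {w : 𝟭 C ⟶ 𝟭 C} {w' : 𝟭 C' ⟶ 𝟭 C'} {X Y Z : TensObj C C' w w'}
    (uf : THom X Y) (ug : THom Y Z) : THom X Z := by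
  refine Quot.lift (fun p => Quot.lift
      (fun q => THom.mk (p.1 ≫ q.1) (p.2 ≫ q.2)) ?_ ug) ?_ uf
  · rintro _ _ ⟨t, g, g', rfl, rfl⟩
    have e1 : p.1 ≫ homAct w t g = homAct w t (p.1 ≫ g) := by
      simp only [homAct, ← Category.assoc]
      rw [← wpow_natural]
    have e2 : p.2 ≫ homAct w' t g' = homAct w' t (p.2 ≫ g') := by
      simp only [homAct, ← Category.assoc]
      rw [← wpow_natural]
    show THom.mk _ _ = THom.mk _ _
    rw [e1, e2]
    exact Quot.sound ⟨t, p.1 ≫ g, p.2 ≫ g', rfl, rfl⟩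
  · rintro _ _ ⟨t, f, f', rfl, rfl⟩
    induction ug using Quot.ind with | _ q =>
    show THom.mk _ _ = THom.mk _ _
    have e1 : homAct w t f ≫ q.1 = homAct w t (f ≫ q.1) := by
      simp [homAct]
    have e2 : homAct w' t f' ≫ q.2 = homAct w' t (f' ≫ q.2) := by
      simp [homAct]
    rw [e1, e2]
    exact Quot.sound ⟨t, f ≫ q.1, f' ≫ q.2, rfl, rfl⟩

/-- The tensor product `Λ`-category `C ⊗_ℕ C'`. -/
instance tensCategory {w : 𝟭 C ⟶ 𝟭 C} {w' : 𝟭 C' ⟶ 𝟭 C'} :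
    Category (TensObj C C' w w') where
  Hom := THom
  id X := THom.mk (𝟙 X.fst) (𝟙 X.snd)
  comp := tcomp
  id_comp := by
    rintro X Y ⟨⟨f, f'⟩⟩
    show THom.mk _ _ = THom.mk _ _
    simp
  comp_id := by
    rintro X Y ⟨⟨f, f'⟩⟩
    show THom.mk _ _ = THom.mk _ _
    simp
  assoc := by
    rintro W X Y Z ⟨⟨f, f'⟩⟩ ⟨⟨g, g'⟩⟩ ⟨⟨h, h'⟩⟩
    show THom.mk _ _ = THom.mk _ _
    simp

/-- The `Λ`-structure `w_{(x,x')} = [w_x, id_{x'}] = [id_x, w'_{x'}]` of the tensor product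
`Λ`-category. -/
def tensW (w : 𝟭 C ⟶ 𝟭 C) (w' : 𝟭 C' ⟶ 𝟭 C') :
    𝟭 (TensObj C C' w w') ⟶ 𝟭 (TensObj C C' w w') where
  app X := THom.mk (w.app X.fst) (𝟙 X.snd)
  naturality := by
    rintro X Y ⟨⟨f, f'⟩⟩
    show THom.mk _ _ = THom.mk _ _
    have h := w.naturality f
    simp only [Functor.id_map] at h
    simp [h]

/-- The internal Hom `Λ`-category `IFun_Λ(C', D)`: objects are `Λ`-functors `C' → D`, morphisms
are all natural transformations. -/
abbrev LamFunCat {C' D : Type} [SmallCategory C'] [SmallCategory D]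
    (w' : 𝟭 C' ⟶ 𝟭 C') (wD : 𝟭 D ⟶ 𝟭 D) :=
  CategoryTheory.ObjectProperty.FullSubcategory (IsLambdaFunctor w' wD)

/-- The `Λ`-structure `(1 + η)_x = w_{G(x)} ∘ η_x` on `IFun_Λ(C', D)`; its component at a
`Λ`-functor `F` is the natural transformation with components `w_{F(x)}`. -/
def ifunW {C' D : Type} [SmallCategory C'] [SmallCategory D]
    (w' : 𝟭 C' ⟶ 𝟭 C') (wD : 𝟭 D ⟶ 𝟭 D) :
    𝟭 (LamFunCat w' wD) ⟶ 𝟭 (LamFunCat w' wD) where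
  app F := ObjectProperty.homMk
    { app := fun x => wD.app (F.obj.obj x)
      naturality := fun x y f => by simpa using wD.naturality (F.obj.map f) }
  naturality F G η := by
    apply ObjectProperty.hom_ext
    apply NatTrans.ext
    funext x
    simpa using wD.naturality (η.hom.app x)

/-- The functor `u ⊗ id : C₀ ⊗_ℕ C' → C ⊗_ℕ C'` induced by a `Λ`-functor `u : C₀ → C`. -/
def tensMapL {C0 : Type} [SmallCategory C0] {w0 : 𝟭 C0 ⟶ 𝟭 C0} {w : 𝟭 C ⟶ 𝟭 C}
    (w' : 𝟭 C' ⟶ 𝟭 C') (u : C0 ⥤ C) (hu : IsLambdaFunctor w0 w u) :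
    TensObj C0 C' w0 w' ⥤ TensObj C C' w w' where
  obj X := ⟨u.obj X.fst, X.snd⟩
  map {X Y} := Quot.map (fun p => (u.map p.1, p.2)) (by
    rintro _ _ ⟨t, f, f', rfl, rfl⟩
    exact ⟨t, u.map f, f', by simp [map_homAct hu], rfl⟩)
  map_id X := by
    show THom.mk _ _ = THom.mk _ _
    simp
  map_comp := by
    rintro X Y Z ⟨⟨f, f'⟩⟩ ⟨⟨g, g'⟩⟩
    show THom.mk _ _ = THom.mk _ _
    simp

/-- The functor `id ⊗ v : C ⊗_ℕ C₀' → C ⊗_ℕ C'` induced by a `Λ`-functor `v : C₀' → C'`. -/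
def tensMapR {C0' : Type} [SmallCategory C0'] {w0' : 𝟭 C0' ⟶ 𝟭 C0'} {w' : 𝟭 C' ⟶ 𝟭 C'}
    (w : 𝟭 C ⟶ 𝟭 C) (v : C0' ⥤ C') (hv : IsLambdaFunctor w0' w' v) :
    TensObj C C0' w w0' ⥤ TensObj C C' w w' where
  obj X := ⟨X.fst, v.obj X.snd⟩
  map {X Y} := Quot.map (fun p => (p.1, v.map p.2)) (by
    rintro _ _ ⟨t, f, f', rfl, rfl⟩
    exact ⟨t, f, v.map f', rfl, by simp [map_homAct hv]⟩)
  map_id X := by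
    show THom.mk _ _ = THom.mk _ _
    simp
  map_comp := by
    rintro X Y Z ⟨⟨f, f'⟩⟩ ⟨⟨g, g'⟩⟩
    show THom.mk _ _ = THom.mk _ _
    simp

/-- Postcomposition `IFun_Λ(C', D) → IFun_Λ(C', E)` with a `Λ`-functor `K : D → E`. -/
def ifunPost {D E : Type} [SmallCategory D] [SmallCategory E]
    (w' : 𝟭 C' ⟶ 𝟭 C') {wD : 𝟭 D ⟶ 𝟭 D} {wE : 𝟭 E ⟶ 𝟭 E}
    (K : D ⥤ E) (hK : IsLambdaFunctor wD wE K) :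
    LamFunCat w' wD ⥤ LamFunCat w' wE where
  obj F := ⟨F.obj ⋙ K, fun x => by
    show K.map (F.obj.map (w'.app x)) = _
    rw [F.property x, hK]
    rfl⟩
  map η := ObjectProperty.homMk (Functor.whiskerRight η.hom K)
  map_id := by
    intros; apply ObjectProperty.hom_ext; apply NatTrans.ext; funext x
    simp
  map_comp := by
    intros; apply ObjectProperty.hom_ext; apply NatTrans.ext; funext x
    simp

/-- Precomposition `IFun_Λ(C', D) → IFun_Λ(C₀', D)` with a `Λ`-functor `v : C₀' → C'`. -/
def ifunPre {C0' D : Type} [SmallCategory C0'] [SmallCategory D]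
    {w0' : 𝟭 C0' ⟶ 𝟭 C0'} {w' : 𝟭 C' ⟶ 𝟭 C'}
    (v : C0' ⥤ C') (hv : IsLambdaFunctor w0' w' v) (wD : 𝟭 D ⟶ 𝟭 D) :
    LamFunCat w' wD ⥤ LamFunCat w0' wD where
  obj F := ⟨v ⋙ F.obj, fun x => by
    show F.obj.map (v.map (w0'.app x)) = _
    rw [hv x, F.property]
    rfl⟩
  map η := ObjectProperty.homMk (Functor.whiskerLeft v η.hom)
  map_id := by
    intros; apply ObjectProperty.hom_ext; apply NatTrans.ext; funext x
    simp
  map_comp := by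
    intros; apply ObjectProperty.hom_ext; apply NatTrans.ext; funext x
    simp

theorem eqToHom_self_comp {A : Type} [SmallCategory A] {X Y : A} (h : X = X) (h' : Y = Y)
    (f : X ⟶ Y) : f = eqToHom h ≫ f ≫ eqToHom h' := by simp

section Curry

variable {D : Type} [SmallCategory D]

theorem THom.mk_comp {w : 𝟭 C ⟶ 𝟭 C} {w' : 𝟭 C' ⟶ 𝟭 C'} {X Y Z : TensObj C C' w w'}
    (f : X.fst ⟶ Y.fst) (f' : X.snd ⟶ Y.snd) (g : Y.fst ⟶ Z.fst) (g' : Y.snd ⟶ Z.snd) :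
    ((THom.mk f f' : X ⟶ Y) ≫ (THom.mk g g' : Y ⟶ Z) : X ⟶ Z) = THom.mk (f ≫ g) (f' ≫ g') := rfl

/-- `[w_x, id] = [id, w'_{x'}]`. -/
theorem mk_w_eq (w : 𝟭 C ⟶ 𝟭 C) (w' : 𝟭 C' ⟶ 𝟭 C') (x : C) (x' : C') :
    (THom.mk (w.app x) (𝟙 x') :
      THom (⟨x, x'⟩ : TensObj C C' w w') ⟨x, x'⟩) = THom.mk (𝟙 x) (w'.app x') := by
  have h : (THom.mk (homAct w 1 (𝟙 x)) (𝟙 x') :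
      THom (⟨x, x'⟩ : TensObj C C' w w') ⟨x, x'⟩) = THom.mk (𝟙 x) (homAct w' 1 (𝟙 x')) :=
    Quot.sound ⟨1, 𝟙 x, 𝟙 x', rfl, rfl⟩
  simpa [homAct, wpow, THom.mk] using h

/-- The value at `x : C` of the curried functor. -/
def curryObj {w : 𝟭 C ⟶ 𝟭 C} {w' : 𝟭 C' ⟶ 𝟭 C'} {wD : 𝟭 D ⟶ 𝟭 D}
    (F : TensObj C C' w w' ⥤ D) (hF : IsLambdaFunctor (tensW w w') wD F) (x : C) :
    LamFunCat w' wD :=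
  ⟨{ obj := fun x' => F.obj ⟨x, x'⟩
     map := fun {x' y'} f' =>
       F.map (THom.mk (X := ⟨x, x'⟩) (Y := ⟨x, y'⟩) (𝟙 x) f')
     map_id := fun x' => F.map_id ⟨x, x'⟩
     map_comp := fun {x' y' z'} f' g' => by
       show F.map (THom.mk (X := ⟨x, x'⟩) (Y := ⟨x, z'⟩) (𝟙 x) (f' ≫ g')) =
         F.map (THom.mk (X := ⟨x, x'⟩) (Y := ⟨x, y'⟩) (𝟙 x) f') ≫
           F.map (THom.mk (X := ⟨x, y'⟩) (Y := ⟨x, z'⟩) (𝟙 x) g')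
       rw [← F.map_comp, THom.mk_comp, Category.id_comp] },
   fun x' => by
     show F.map (THom.mk (X := ⟨x, x'⟩) (Y := ⟨x, x'⟩) (𝟙 x) (w'.app x')) = _
     rw [← mk_w_eq]
     exact hF ⟨x, x'⟩⟩

/-- Currying a `Λ`-functor `C ⊗_ℕ C' → D`. -/
def curryFun {w : 𝟭 C ⟶ 𝟭 C} {w' : 𝟭 C' ⟶ 𝟭 C'} {wD : 𝟭 D ⟶ 𝟭 D}
    (F : TensObj C C' w w' ⥤ D) (hF : IsLambdaFunctor (tensW w w') wD F) :
    C ⥤ LamFunCat w' wD where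
  obj := curryObj F hF
  map {x y} f := ObjectProperty.homMk
    { app := fun x' => F.map (THom.mk (X := ⟨x, x'⟩) (Y := ⟨y, x'⟩) f (𝟙 x'))
      naturality := fun x' y' f' => by
        show F.map (THom.mk (X := ⟨x, x'⟩) (Y := ⟨x, y'⟩) (𝟙 x) f') ≫
            F.map (THom.mk (X := ⟨x, y'⟩) (Y := ⟨y, y'⟩) f (𝟙 y')) =
          F.map (THom.mk (X := ⟨x, x'⟩) (Y := ⟨y, x'⟩) f (𝟙 x')) ≫
            F.map (THom.mk (X := ⟨y, x'⟩) (Y := ⟨y, y'⟩) (𝟙 y) f')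
        rw [← F.map_comp, ← F.map_comp, THom.mk_comp, THom.mk_comp]
        simp }
  map_id x := by
    apply ObjectProperty.hom_ext; apply NatTrans.ext; funext x'
    show F.map (THom.mk (X := ⟨x, x'⟩) (Y := ⟨x, x'⟩) (𝟙 x) (𝟙 x')) = _
    exact F.map_id ⟨x, x'⟩
  map_comp {x y z} f g := by
    apply ObjectProperty.hom_ext; apply NatTrans.ext; funext x'
    show F.map (THom.mk (X := ⟨x, x'⟩) (Y := ⟨z, x'⟩) (f ≫ g) (𝟙 x')) =
      F.map (THom.mk (X := ⟨x, x'⟩) (Y := ⟨y, x'⟩) f (𝟙 x')) ≫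
        F.map (THom.mk (X := ⟨y, x'⟩) (Y := ⟨z, x'⟩) g (𝟙 x'))
    rw [← F.map_comp, THom.mk_comp, Category.id_comp]

theorem curryFun_lambda {w : 𝟭 C ⟶ 𝟭 C} {w' : 𝟭 C' ⟶ 𝟭 C'} {wD : 𝟭 D ⟶ 𝟭 D}
    (F : TensObj C C' w w' ⥤ D) (hF : IsLambdaFunctor (tensW w w') wD F) :
    IsLambdaFunctor w (ifunW w' wD) (curryFun F hF) := by
  intro x
  apply ObjectProperty.hom_ext; apply NatTrans.ext; funext x'
  exact hF ⟨x, x'⟩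

theorem ifunW_wpow_app {w' : 𝟭 C' ⟶ 𝟭 C'} {wD : 𝟭 D ⟶ 𝟭 D}
    (G : LamFunCat w' wD) (t : ℕ) (x' : C') :
    (wpow (ifunW w' wD) G t).hom.app x' = wpow wD (G.obj.obj x') t := by
  induction t with
  | zero => rfl
  | succ t ih =>
    have e : (wpow (ifunW w' wD) G (t + 1)).hom.app x' =
        ((ifunW w' wD).app G).hom.app x' ≫ (wpow (ifunW w' wD) G t).hom.app x' := rfl
    rw [e, ih]; rfl

/-- Uncurrying a `Λ`-functor `C → IFun_Λ(C', D)`. -/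
def uncurryFun {w : 𝟭 C ⟶ 𝟭 C} {w' : 𝟭 C' ⟶ 𝟭 C'} {wD : 𝟭 D ⟶ 𝟭 D}
    (G : C ⥤ LamFunCat w' wD) (hG : IsLambdaFunctor w (ifunW w' wD) G) :
    TensObj C C' w w' ⥤ D where
  obj X := (G.obj X.fst).obj.obj X.snd
  map {X Y} := Quot.lift
    (fun p => (G.map p.1).hom.app X.snd ≫ (G.obj Y.fst).obj.map p.2) (by
    rintro _ _ ⟨t, f, f', rfl, rfl⟩
    show (G.map (homAct w t f)).hom.app X.snd ≫ (G.obj Y.fst).obj.map f' =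
      (G.map f).hom.app X.snd ≫ (G.obj Y.fst).obj.map (homAct w' t f')
    rw [homAct, homAct, G.map_comp, (G.obj Y.fst).obj.map_comp,
      map_wpow (G.obj Y.fst).property]
    have e1 : (G.map (wpow w X.fst t) ≫ G.map f).hom.app X.snd =
        (G.map (wpow w X.fst t)).hom.app X.snd ≫ (G.map f).hom.app X.snd := rfl
    rw [e1, map_wpow hG, ifunW_wpow_app, Category.assoc,
      ← Category.assoc ((G.map f).hom.app X.snd),
      ← wpow_natural wD ((G.map f).hom.app X.snd) t, Category.assoc])
  map_id X := by
    show (G.map (𝟙 X.fst)).hom.app X.snd ≫ (G.obj X.fst).obj.map (𝟙 X.snd) = _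
    rw [G.map_id, (G.obj X.fst).obj.map_id]
    show 𝟙 _ ≫ 𝟙 _ = _
    simp
  map_comp {X Y Z} := by
    rintro ⟨⟨f, f'⟩⟩ ⟨⟨g, g'⟩⟩
    show (G.map (f ≫ g)).hom.app X.snd ≫ (G.obj Z.fst).obj.map (f' ≫ g') =
      ((G.map f).hom.app X.snd ≫ (G.obj Y.fst).obj.map f') ≫
        ((G.map g).hom.app Y.snd ≫ (G.obj Z.fst).obj.map g')
    have e1 : (G.map (f ≫ g)).hom.app X.snd = (G.map f).hom.app X.snd ≫ (G.map g).hom.app X.snd := by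
      rw [G.map_comp]; rfl
    have e2 := (G.map g).hom.naturality f'
    rw [e1, (G.obj Z.fst).obj.map_comp]
    simp only [Category.assoc]
    rw [← Category.assoc ((G.map g).hom.app X.snd), ← e2]
    simp

theorem uncurryFun_lambda {w : 𝟭 C ⟶ 𝟭 C} {w' : 𝟭 C' ⟶ 𝟭 C'} {wD : 𝟭 D ⟶ 𝟭 D}
    (G : C ⥤ LamFunCat w' wD) (hG : IsLambdaFunctor w (ifunW w' wD) G) :
    IsLambdaFunctor (tensW w w') wD (uncurryFun G hG) := by
  intro X
  show (G.map (w.app X.fst)).hom.app X.snd ≫ (G.obj X.fst).obj.map (𝟙 X.snd) = _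
  rw [(G.obj X.fst).obj.map_id, hG X.fst]
  show ((ifunW w' wD).app (G.obj X.fst)).hom.app X.snd ≫ 𝟙 _ = _
  rw [Category.comp_id]
  rfl

theorem FullSubcategory.ext' {A : Type} [SmallCategory A] {P : A → Prop}
    {X Y : CategoryTheory.ObjectProperty.FullSubcategory P} (h : X.obj = Y.obj) : X = Y := by
  cases X; cases Y; cases h; rfl

theorem fs_eqToHom_app {P : (C' ⥤ D) → Prop}
    {X Y : CategoryTheory.ObjectProperty.FullSubcategory P} (h : X = Y) (x' : C')
    (h2 : X.obj.obj x' = Y.obj.obj x') : (eqToHom h).hom.app x' = eqToHom h2 := by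
  subst h; rfl

/-- The currying equivalence. -/
def curryEquiv (C C' D : Type) [SmallCategory C] [SmallCategory C'] [SmallCategory D]
    (w : 𝟭 C ⟶ 𝟭 C) (w' : 𝟭 C' ⟶ 𝟭 C') (wD : 𝟭 D ⟶ 𝟭 D) :
    {F : TensObj C C' w w' ⥤ D // IsLambdaFunctor (tensW w w') wD F} ≃
    {F : C ⥤ LamFunCat w' wD // IsLambdaFunctor w (ifunW w' wD) F} where
  toFun F := ⟨curryFun F.1 F.2, curryFun_lambda F.1 F.2⟩
  invFun G := ⟨uncurryFun G.1 G.2, uncurryFun_lambda G.1 G.2⟩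
  left_inv := by
    rintro ⟨F, hF⟩
    apply Subtype.ext
    refine CategoryTheory.Functor.ext (fun X => rfl) ?_
    rintro X Y ⟨⟨f, f'⟩⟩
    show F.map (THom.mk (X := ⟨X.fst, X.snd⟩) (Y := ⟨Y.fst, X.snd⟩) f (𝟙 X.snd)) ≫
        F.map (THom.mk (X := ⟨Y.fst, X.snd⟩) (Y := ⟨Y.fst, Y.snd⟩) (𝟙 Y.fst) f') = _
    rw [← F.map_comp, THom.mk_comp, Category.comp_id, Category.id_comp]
    simp only [eqToHom_refl, Category.comp_id, Category.id_comp]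
    exact eqToHom_self_comp _ _ _
  right_inv := by
    rintro ⟨G, hG⟩
    apply Subtype.ext
    have hobj : ∀ x : C,
        (curryFun (uncurryFun G hG) (uncurryFun_lambda G hG)).obj x = G.obj x := by
      intro x
      apply FullSubcategory.ext'
      refine CategoryTheory.Functor.ext (fun x' => rfl) ?_
      intro x' y' f'
      show (G.map (𝟙 x)).hom.app x' ≫ (G.obj x).obj.map f' = _
      rw [G.map_id]
      show 𝟙 _ ≫ _ = _
      simp
      exact eqToHom_self_comp _ _ _
    refine CategoryTheory.Functor.ext hobj ?_
    intro x y f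
    apply ObjectProperty.hom_ext; apply NatTrans.ext; funext x'
    show (G.map f).hom.app x' ≫ (G.obj y).obj.map (𝟙 x') =
      (eqToHom (hobj x) ≫ G.map f ≫ eqToHom (hobj y).symm).hom.app x'
    have e : (eqToHom (hobj x) ≫ G.map f ≫ eqToHom (hobj y).symm).hom.app x' =
        (eqToHom (hobj x)).hom.app x' ≫ ((G.map f).hom.app x' ≫ (eqToHom (hobj y).symm).hom.app x') :=
      rfl
    rw [e, fs_eqToHom_app (hobj x) x' rfl, fs_eqToHom_app (hobj y).symm x' rfl]
    simp
    exact eqToHom_self_comp _ _ _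

end Curry
/-- For small `Λ`-categories `C, C', D` there is a bijection, natural in `C`,
`C'` and `D`, between the set of `Λ`-functors `C ⊗_ℕ C' → D` and the set of `Λ`-functors from
`C` to the `Λ`-category `IFun_Λ(C', D)` of `Λ`-functors `C' → D`; this exhibits the monoidal
structure `⊗_ℕ` on small `Λ`-categories as closed.  (Naturality is expressed by compatibility
with pre- and postcomposition by `Λ`-functors in each of the three variables.) -/
theorem lambda_tensor_hom_adjunction :
    ∃ e : ∀ (C C' D : Type) [SmallCategory C] [SmallCategory C'] [SmallCategory D]
        (w : 𝟭 C ⟶ 𝟭 C) (w' : 𝟭 C' ⟶ 𝟭 C') (wD : 𝟭 D ⟶ 𝟭 D),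
        {F : TensObj C C' w w' ⥤ D // IsLambdaFunctor (tensW w w') wD F} ≃
        {F : C ⥤ LamFunCat w' wD // IsLambdaFunctor w (ifunW w' wD) F},
      -- naturality in the third variable `D`
      (∀ (C C' D E : Type) [SmallCategory C] [SmallCategory C'] [SmallCategory D]
        [SmallCategory E]
        (w : 𝟭 C ⟶ 𝟭 C) (w' : 𝟭 C' ⟶ 𝟭 C') (wD : 𝟭 D ⟶ 𝟭 D) (wE : 𝟭 E ⟶ 𝟭 E)
        (K : D ⥤ E) (hK : IsLambdaFunctor wD wE K)
        (F : {F : TensObj C C' w w' ⥤ D // IsLambdaFunctor (tensW w w') wD F})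
        (F' : {F : TensObj C C' w w' ⥤ E // IsLambdaFunctor (tensW w w') wE F}),
        F'.val = F.val ⋙ K →
          (e C C' E w w' wE F').val = (e C C' D w w' wD F).val ⋙ ifunPost w' K hK) ∧
      -- naturality in the first variable `C`
      (∀ (C0 C C' D : Type) [SmallCategory C0] [SmallCategory C] [SmallCategory C']
        [SmallCategory D]
        (w0 : 𝟭 C0 ⟶ 𝟭 C0) (w : 𝟭 C ⟶ 𝟭 C) (w' : 𝟭 C' ⟶ 𝟭 C') (wD : 𝟭 D ⟶ 𝟭 D)
        (u : C0 ⥤ C) (hu : IsLambdaFunctor w0 w u)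
        (F : {F : TensObj C C' w w' ⥤ D // IsLambdaFunctor (tensW w w') wD F})
        (F0 : {F : TensObj C0 C' w0 w' ⥤ D // IsLambdaFunctor (tensW w0 w') wD F}),
        F0.val = tensMapL w' u hu ⋙ F.val →
          (e C0 C' D w0 w' wD F0).val = u ⋙ (e C C' D w w' wD F).val) ∧
      -- naturality in the second variable `C'`
      (∀ (C C0' C' D : Type) [SmallCategory C] [SmallCategory C0'] [SmallCategory C']
        [SmallCategory D]
        (w : 𝟭 C ⟶ 𝟭 C) (w0' : 𝟭 C0' ⟶ 𝟭 C0') (w' : 𝟭 C' ⟶ 𝟭 C') (wD : 𝟭 D ⟶ 𝟭 D)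
        (v : C0' ⥤ C') (hv : IsLambdaFunctor w0' w' v)
        (F : {F : TensObj C C' w w' ⥤ D // IsLambdaFunctor (tensW w w') wD F})
        (F0 : {F : TensObj C C0' w w0' ⥤ D // IsLambdaFunctor (tensW w w0') wD F}),
        F0.val = tensMapR w v hv ⋙ F.val →
          (e C C0' D w w0' wD F0).val = (e C C' D w w' wD F).val ⋙ ifunPre v hv wD) := by

  refine ⟨fun C C' D _ _ _ w w' wD => curryEquiv C C' D w w' wD, ?_, ?_, ?_⟩
  · -- naturality in D
    rintro C C' D E _ _ _ _ w w' wD wE K hK ⟨F, hF⟩ ⟨F', hF'⟩ h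
    simp only at h
    subst h
    rfl
  · -- naturality in C
    rintro C0 C C' D _ _ _ _ w0 w w' wD u hu ⟨F, hF⟩ ⟨F0, hF0⟩ h
    simp only at h
    subst h
    show curryFun (tensMapL w' u hu ⋙ F) hF0 = u ⋙ curryFun F hF
    have hobj : ∀ x : C0,
        (curryFun (tensMapL w' u hu ⋙ F) hF0).obj x = (u ⋙ curryFun F hF).obj x := by
      intro x
      apply FullSubcategory.ext'
      refine CategoryTheory.Functor.ext (fun x' => rfl) ?_
      intro x' y' f'
      show F.map (THom.mk (X := ⟨u.obj x, x'⟩) (Y := ⟨u.obj x, y'⟩) (u.map (𝟙 x)) f') = _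
      rw [u.map_id]
      exact eqToHom_self_comp _ _ _
    refine CategoryTheory.Functor.ext hobj ?_
    intro x y f
    apply ObjectProperty.hom_ext; apply NatTrans.ext; funext x'
    show F.map (THom.mk (X := ⟨u.obj x, x'⟩) (Y := ⟨u.obj y, x'⟩) (u.map f) (𝟙 x')) =
      (eqToHom (hobj x) ≫ (u ⋙ curryFun F hF).map f ≫ eqToHom (hobj y).symm).hom.app x'
    have e : (eqToHom (hobj x) ≫ (u ⋙ curryFun F hF).map f ≫ eqToHom (hobj y).symm).hom.app x' =
        (eqToHom (hobj x)).hom.app x' ≫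
          (((u ⋙ curryFun F hF).map f).hom.app x' ≫ (eqToHom (hobj y).symm).hom.app x') := rfl
    rw [e, fs_eqToHom_app (hobj x) x' rfl, fs_eqToHom_app (hobj y).symm x' rfl]
    exact eqToHom_self_comp _ _ _
  · -- naturality in C'
    rintro C C0' C' D _ _ _ _ w w0' w' wD v hv ⟨F, hF⟩ ⟨F0, hF0⟩ h
    simp only at h
    subst h
    show curryFun (tensMapR w v hv ⋙ F) hF0 = curryFun F hF ⋙ ifunPre v hv wD
    have hobj : ∀ x : C,
        (curryFun (tensMapR w v hv ⋙ F) hF0).obj x =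
          (curryFun F hF ⋙ ifunPre v hv wD).obj x := by
      intro x
      apply FullSubcategory.ext'
      refine CategoryTheory.Functor.ext (fun x0' => rfl) ?_
      intro x0' y0' f0'
      show F.map (THom.mk (X := ⟨x, v.obj x0'⟩) (Y := ⟨x, v.obj y0'⟩) (𝟙 x) (v.map f0')) = _
      exact eqToHom_self_comp _ _ _
    refine CategoryTheory.Functor.ext hobj ?_
    intro x y f
    apply ObjectProperty.hom_ext; apply NatTrans.ext; funext x0'
    show F.map (THom.mk (X := ⟨x, v.obj x0'⟩) (Y := ⟨y, v.obj x0'⟩) f (v.map (𝟙 x0'))) =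
      (eqToHom (hobj x) ≫ (curryFun F hF ⋙ ifunPre v hv wD).map f ≫
        eqToHom (hobj y).symm).hom.app x0'
    have e : (eqToHom (hobj x) ≫ (curryFun F hF ⋙ ifunPre v hv wD).map f ≫
          eqToHom (hobj y).symm).hom.app x0' =
        (eqToHom (hobj x)).hom.app x0' ≫
          (((curryFun F hF ⋙ ifunPre v hv wD).map f).hom.app x0' ≫
            (eqToHom (hobj y).symm).hom.app x0') := rfl
    rw [e, fs_eqToHom_app (hobj x) x0' rfl, fs_eqToHom_app (hobj y).symm x0' rfl]
    rw [v.map_id]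
    exact eqToHom_self_comp _ _ _
end
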